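/- For c₂ = (5 − √5)/10 and c₃ = (5 + √5)/10, the weights b₁ = 1/12, b₂ = (5 + √5)/24, b₃ = 5/(6(5 + √5)) satisfy b₁ + b₂ + b₃ = 1/2, b₂c₂ + b₃c₃ = 1/6, b₂c₂² + b₃c₃² = 1/12, and b₂c₂³ + b₃c₃³ = 1/20. -/

import Mathlib

theorem OTDDIRK5s3_order_conditions :
    let c₂ : ℝ := (5 - Real.sqrt 5) / 10
    let c₃ : ℝ := (5 + Real.sqrt 5) / 10
    let b₁ : ℝ := 1 / 12
    let b₂ : ℝ := (5 + Real.sqrt 5) / 24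
    let b₃ : ℝ := 5 / (6 * (5 + Real.sqrt 5))
    b₁ + b₂ + b₃ = 1 / 2 ∧
    b₂ * c₂ + b₃ * c₃ = 1 / 6 ∧
    b₂ * c₂ ^ 2 + b₃ * c₃ ^ 2 = 1 / 12 ∧
    b₂ * c₂ ^ 3 + b₃ * c₃ ^ 3 = 1 / 20 := by
  have h5 : Real.sqrt 5 ^ 2 = 5 := Real.sq_sqrt (by norm_num)
  have hpos : (0:ℝ) < Real.sqrt 5 := Real.sqrt_pos.mpr (by norm_num)
  have hne : (6 * (5 + Real.sqrt 5)) ≠ 0 := by positivity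
  refine ⟨?_, ?_, ?_, ?_⟩ <;> field_simp
  · nlinarith [h5, hpos]
  · nlinarith [h5, hpos]
  · nlinarith [h5, hpos]
  · linear_combination (-120 * Real.sqrt 5 ^ 2 + 1200 * Real.sqrt 5 + 1800) * h5
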